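/- Let (X, 𝔅, μ) be a σ-finite measure space and let 𝓔 be a Dirichlet form on L²(μ). If f : X → ℝ is square-integrable (∫ f² dμ < ∞) and there exists a net (f_i) in D(𝓔) which is 𝓔-Cauchy (for every ε > 0 there is i₀ with 𝓔(f_i − f_j) ≤ ε for all i, j ⪰ i₀) and which converges to f locally in μ-measure, then 𝓔(f) < ∞. (Thus D(𝓔) equals the intersection of the extended Dirichlet space of 𝓔 with L²(μ).) -/

import Mathlib

open Filter MeasureTheory Topology
open scoped ENNReal

section helpers
variable {X : Type*} [MeasurableSpace X] {μ : MeasureTheory.Measure X}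

private lemma aux_tail [SigmaFinite μ] (W : X → ℝ≥0∞) (hW : ∫⁻ x, W x ∂μ ≠ ⊤) {a : ℝ≥0∞}
    (ha : 0 < a) :
    ∃ U : Set X, MeasurableSet U ∧ μ U < ⊤ ∧ ∫⁻ x in Uᶜ, W x ∂μ ≤ a := by
  obtain ⟨W', hW'm, hW'le, hW'eq⟩ := MeasureTheory.exists_measurable_le_lintegral_eq μ W
  by_cases htriv : ∫⁻ x, W x ∂μ ≤ a
  · exact ⟨spanningSets μ 0, measurableSet_spanningSets μ 0, measure_spanningSets_lt_top μ 0,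
      le_trans (MeasureTheory.setLIntegral_le_lintegral _ _) htriv⟩
  push_neg at htriv
  have hmono : Monotone (fun n => (spanningSets μ n).indicator W') := fun m n h =>
    Set.indicator_le_indicator_of_subset (monotone_spanningSets μ h) (fun x => zero_le)
  have hsup : ⨆ n, ∫⁻ x in spanningSets μ n, W' x ∂μ = ∫⁻ x, W' x ∂μ := by
    have h1 : ∀ n, ∫⁻ x in spanningSets μ n, W' x ∂μ
        = ∫⁻ x, (spanningSets μ n).indicator W' x ∂μ := fun n =>
      (lintegral_indicator (measurableSet_spanningSets μ n) W').symm
    simp_rw [h1]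
    rw [← lintegral_iSup (fun n => hW'm.indicator (measurableSet_spanningSets μ n)) hmono]
    congr 1
    funext x
    have hx : ∃ n, x ∈ spanningSets μ n := by
      have h := iUnion_spanningSets μ
      have : x ∈ ⋃ n, spanningSets μ n := h ▸ Set.mem_univ x
      exact Set.mem_iUnion.1 this
    obtain ⟨n, hn⟩ := hx
    apply le_antisymm
    · exact iSup_le fun m => Set.indicator_le_self _ _ x
    · exact le_iSup_of_le n (by rw [Set.indicator_of_mem hn])
  rw [hW'eq] at htriv
  have hW'top : ∫⁻ x, W' x ∂μ ≠ ⊤ := hW'eq ▸ hW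
  have hlt : ∫⁻ x, W' x ∂μ - a < ⨆ n, ∫⁻ x in spanningSets μ n, W' x ∂μ := by
    rw [hsup]
    exact ENNReal.sub_lt_self hW'top (lt_trans ha htriv).ne' ha.ne'
  obtain ⟨n, hn⟩ := lt_iSup_iff.1 hlt
  refine ⟨spanningSets μ n, measurableSet_spanningSets μ n, measure_spanningSets_lt_top μ n, ?_⟩
  have hUfin : ∫⁻ x in spanningSets μ n, W x ∂μ ≠ ⊤ :=
    fun h => hW (top_le_iff.1 (h ▸ MeasureTheory.setLIntegral_le_lintegral _ _))
  rw [MeasureTheory.setLIntegral_compl (measurableSet_spanningSets μ n) hUfin]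
  calc ∫⁻ x, W x ∂μ - ∫⁻ x in spanningSets μ n, W x ∂μ
      ≤ ∫⁻ x, W' x ∂μ - ∫⁻ x in spanningSets μ n, W' x ∂μ :=
        tsub_le_tsub (le_of_eq hW'eq) (lintegral_mono hW'le)
    _ ≤ a := by
        rw [tsub_le_iff_right]
        calc ∫⁻ x, W' x ∂μ ≤ (∫⁻ x, W' x ∂μ - a) + a := le_tsub_add
          _ ≤ (∫⁻ x in spanningSets μ n, W' x ∂μ) + a := add_le_add_left hn.le a
          _ = a + ∫⁻ x in spanningSets μ n, W' x ∂μ := add_comm _ _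

/-- Dominated convergence: a net of functions dominated by a fixed function of finite
integral, converging locally in measure to `0`, has integrals tending to `0`. -/
private lemma aux_dct [SigmaFinite μ] {ι : Type*} [Preorder ι]
    (φ : ι → X → ℝ≥0∞) (W : X → ℝ≥0∞) (hW : ∫⁻ x, W x ∂μ ≠ ⊤)
    (hle : ∀ i x, φ i x ≤ W x)
    (hc : ∀ U : Set X, MeasurableSet U → μ U < ⊤ → ∀ ε : ℝ, 0 < ε →
      Tendsto (fun i => μ (U ∩ {x | ENNReal.ofReal ε ≤ φ i x})) atTop (𝓝 0)) :
    Tendsto (fun i => ∫⁻ x, φ i x ∂μ) atTop (𝓝 0) := by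
  rw [ENNReal.tendsto_nhds_zero]
  intro η hη
  set a := min (η / 3) 1 with ha_def
  have ha : 0 < a := lt_min (ENNReal.div_pos hη.ne' (by norm_num)) one_pos
  have ha_top : a ≠ ⊤ := ((min_le_right _ _).trans_lt (by norm_num)).ne
  have haη : a + a + a ≤ η := by
    calc a + a + a ≤ η/3 + η/3 + η/3 := by gcongr <;> exact min_le_left _ _
      _ = 3 * (η / 3) := by ring
      _ ≤ η := ENNReal.mul_div_le
  obtain ⟨U, hUm, hUfin, hUtail⟩ := aux_tail W hW ha
  obtain ⟨δ, hδ0, hδ⟩ := MeasureTheory.exists_pos_setLIntegral_lt_of_measure_lt hW ha.ne'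
  obtain ⟨ε, hε0, hεU⟩ : ∃ ε : ℝ, 0 < ε ∧ ENNReal.ofReal ε * μ U ≤ a := by
    rcases eq_or_ne (μ U) 0 with h0 | h0
    · exact ⟨1, one_pos, by simp [h0]⟩
    · have hfin : a / μ U ≠ ⊤ := (ENNReal.div_lt_top ha_top h0).ne
      refine ⟨(a / μ U).toReal,
        ENNReal.toReal_pos (ENNReal.div_pos ha.ne' hUfin.ne).ne' hfin, ?_⟩
      rw [ENNReal.ofReal_toReal hfin, ENNReal.div_mul_cancel h0 hUfin.ne]
  have hev2 : ∀ᶠ i in atTop, μ (U ∩ {x | ENNReal.ofReal ε ≤ φ i x}) < δ :=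
    (hc U hUm hUfin ε hε0).eventually_lt_const hδ0
  filter_upwards [hev2] with i hi
  set S := U ∩ {x | ENNReal.ofReal ε ≤ φ i x} with hS_def
  set T := toMeasurable μ S with hT_def
  have hTm : MeasurableSet T := measurableSet_toMeasurable μ S
  have hμT : μ T < δ := by rwa [hT_def, measure_toMeasurable]
  have b1 : ∫⁻ x in U ∩ T, φ i x ∂μ ≤ a := by
    refine le_trans (lintegral_mono (hle i)) ?_
    exact (hδ (U ∩ T) (lt_of_le_of_lt (measure_mono Set.inter_subset_right) hμT)).le
  have b2 : ∫⁻ x in U \ T, φ i x ∂μ ≤ a := by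
    have hpt : ∀ x ∈ U \ T, φ i x ≤ ENNReal.ofReal ε := by
      intro x hx
      by_contra hcon
      push_neg at hcon
      exact hx.2 (subset_toMeasurable μ S ⟨hx.1, hcon.le⟩)
    calc ∫⁻ x in U \ T, φ i x ∂μ ≤ ∫⁻ _ in U \ T, ENNReal.ofReal ε ∂μ :=
          MeasureTheory.setLIntegral_mono' (hUm.diff hTm) hpt
      _ = ENNReal.ofReal ε * μ (U \ T) := MeasureTheory.setLIntegral_const _ _
      _ ≤ ENNReal.ofReal ε * μ U := mul_le_mul_right (measure_mono Set.diff_subset) _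
      _ ≤ a := hεU
  have b3 : ∫⁻ x in Uᶜ, φ i x ∂μ ≤ a := le_trans (lintegral_mono (hle i)) hUtail
  calc ∫⁻ x, φ i x ∂μ
      = ∫⁻ x in U, φ i x ∂μ + ∫⁻ x in Uᶜ, φ i x ∂μ := (lintegral_add_compl _ hUm).symm
    _ = (∫⁻ x in U ∩ T, φ i x ∂μ + ∫⁻ x in U \ T, φ i x ∂μ) + ∫⁻ x in Uᶜ, φ i x ∂μ := by
        rw [lintegral_inter_add_diff _ U hTm]
    _ ≤ a + a + a := add_le_add (add_le_add b1 b2) b3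
    _ ≤ η := haη

end helpers

/-- From a net tending to zero, extract a sequence (above any fixed index) along which
it tends to zero. -/
private lemma aux_seq {ι : Type*} [Preorder ι] [IsDirected ι (· ≤ ·)] [Nonempty ι] (i₀ : ι)
    (v : ι → ℝ≥0∞) (hv : Tendsto v atTop (𝓝 0)) :
    ∃ s : ℕ → ι, (∀ n, i₀ ≤ s n) ∧ Tendsto (fun n => v (s n)) atTop (𝓝 0) := by
  haveI : (atTop : Filter ι).NeBot := Filter.atTop_neBot_iff.2 ⟨‹_›, ‹_›⟩
  have h : ∀ n : ℕ, ∃ i, i₀ ≤ i ∧ v i ≤ ((n : ℝ≥0∞) + 1)⁻¹ := by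
    intro n
    have h1 : ∀ᶠ i in atTop, v i ≤ ((n : ℝ≥0∞) + 1)⁻¹ :=
      ENNReal.tendsto_nhds_zero.1 hv _
        (ENNReal.inv_pos.2 (ENNReal.add_ne_top.2 ⟨ENNReal.natCast_ne_top n, ENNReal.one_ne_top⟩))
    exact ((eventually_ge_atTop i₀).and h1).exists
  choose s hs1 hs2 using h
  refine ⟨s, hs1, ?_⟩
  have hup : Tendsto (fun n : ℕ => ((n : ℝ≥0∞) + 1)⁻¹) atTop (𝓝 0) := by
    refine tendsto_of_tendsto_of_tendsto_of_le_of_le tendsto_const_nhds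
      ENNReal.tendsto_inv_nat_nhds_zero (fun n => zero_le) (fun n => ?_)
    exact ENNReal.inv_le_inv' le_self_add
  exact tendsto_of_tendsto_of_tendsto_of_le_of_le tendsto_const_nhds hup
    (fun n => zero_le) hs2

section clamp

/-- clamp of `a` into `[-c, c]`. -/
private def rclamp (a c : ℝ) : ℝ := min (max a (-c)) c

private lemma rclamp_abs_le (a c : ℝ) (hc : 0 ≤ c) : |rclamp a c| ≤ c := by
  rw [abs_le]
  exact ⟨le_min (le_max_right a (-c)) (by linarith), min_le_right _ _⟩

private lemma rclamp_lip (a b c : ℝ) : |rclamp a c - rclamp b c| ≤ |a - b| := by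
  have h1 := abs_min_sub_min_le_max (max a (-c)) c (max b (-c)) c
  have h2 := abs_max_sub_max_le_abs a b (-c)
  simp only [sub_self, abs_zero] at h1
  calc |rclamp a c - rclamp b c| ≤ max |max a (-c) - max b (-c)| 0 := h1
    _ = |max a (-c) - max b (-c)| := max_eq_left (abs_nonneg _)
    _ ≤ |a - b| := h2

private lemma rclamp_self (b : ℝ) : rclamp b |b| = b := by
  rw [rclamp, max_eq_left (neg_abs_le b), min_eq_left (le_abs_self b)]

private lemma rclamp_abs_le_abs (a c : ℝ) (hc : 0 ≤ c) : |rclamp a c| ≤ |a| := by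
  have h0 : rclamp 0 c = 0 := by
    rw [rclamp, max_eq_left (neg_nonpos.2 hc), min_eq_left hc]
  have h := rclamp_lip a 0 c
  rw [h0, sub_zero, sub_zero] at h
  exact h

private lemma rclamp_sq_le (a c : ℝ) (hc : 0 ≤ c) : rclamp a c ^ 2 ≤ c ^ 2 := by
  have h := abs_le.1 (rclamp_abs_le a c hc)
  exact sq_le_sq' h.1 h.2

private lemma rclamp_sq_le_self (a c : ℝ) (hc : 0 ≤ c) : rclamp a c ^ 2 ≤ a ^ 2 := by
  have h := rclamp_abs_le_abs a c hc
  have h3 : |rclamp a c| ^ 2 ≤ |a| ^ 2 := pow_le_pow_left₀ (abs_nonneg _) h 2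
  calc rclamp a c ^ 2 = |rclamp a c| ^ 2 := (sq_abs _).symm
    _ ≤ |a| ^ 2 := h3
    _ = a ^ 2 := sq_abs a

private lemma rclamp_diff_sq_le (a b c : ℝ) (hc : 0 ≤ c) :
    (rclamp a c - rclamp b c) ^ 2 ≤ 4 * c ^ 2 := by
  have h1 := rclamp_abs_le a c hc
  have h2 := rclamp_abs_le b c hc
  have h3 : |rclamp a c - rclamp b c| ≤ 2 * c := (abs_sub _ _).trans (by linarith)
  have h4 : |rclamp a c - rclamp b c| ^ 2 ≤ (2 * c) ^ 2 :=
    pow_le_pow_left₀ (abs_nonneg _) h3 2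
  calc (rclamp a c - rclamp b c) ^ 2 = |rclamp a c - rclamp b c| ^ 2 := (sq_abs _).symm
    _ ≤ (2 * c) ^ 2 := h4
    _ = 4 * c ^ 2 := by ring

private lemma rclamp_sub_self_le (a b : ℝ) : |rclamp a (|b|) - a| ≤ 2 * |b - a| := by
  have h2 : |rclamp a (|b|) - b| ≤ |a - b| := by
    have h := rclamp_lip a b (|b|)
    rwa [rclamp_self] at h
  have h1 : |rclamp a (|b|) - a| ≤ |rclamp a (|b|) - b| + |b - a| := abs_sub_le _ b _
  have h4 : |a - b| = |b - a| := abs_sub_comm a b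
  linarith

private lemma rclamp_sub_self_sq_le (a b : ℝ) : (rclamp a (|b|) - a) ^ 2 ≤ 4 * a ^ 2 := by
  have h1 : |rclamp a (|b|)| ≤ |a| := rclamp_abs_le_abs a (|b|) (abs_nonneg b)
  have h3 : |rclamp a (|b|) - a| ≤ 2 * |a| := (abs_sub _ _).trans (by linarith)
  have h4 : |rclamp a (|b|) - a| ^ 2 ≤ (2 * |a|) ^ 2 := pow_le_pow_left₀ (abs_nonneg _) h3 2
  calc (rclamp a (|b|) - a) ^ 2 = |rclamp a (|b|) - a| ^ 2 := (sq_abs _).symm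
    _ ≤ (2 * |a|) ^ 2 := h4
    _ = 4 * |a| ^ 2 := by ring
    _ = 4 * a ^ 2 := by rw [sq_abs]

end clamp

section eform
variable {X : Type*} (E : (X → ℝ) → ℝ≥0∞)
  (hquad : ∀ f g : X → ℝ, 2 * E f + 2 * E g = E (f + g) + E (f - g))
  (hsmul : ∀ (c : ℝ) (f : X → ℝ), E (c • f) = ENNReal.ofReal (c ^ 2) * E f)
  (hcontr : ∀ C : ℝ → ℝ, C 0 = 0 → (∀ x y : ℝ, |C x - C y| ≤ |x - y|) →
    ∀ f : X → ℝ, E (C ∘ f) ≤ E f)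

include hsmul in
private lemma E_neg (u : X → ℝ) : E (-u) = E u := by
  have h := hsmul (-1) u
  rw [neg_one_smul] at h
  rw [h]
  norm_num

include hquad in
private lemma E_add_le (u v : X → ℝ) : E (u + v) ≤ 2 * E u + 2 * E v := by
  rw [hquad u v]; exact le_self_add

include hcontr in
private lemma E_abs (u : X → ℝ) : E (fun x => |u x|) ≤ E u :=
  hcontr abs abs_zero (fun x y => abs_abs_sub_abs_le_abs_sub x y) u

include hquad hsmul hcontr in
private lemma E_max (u v : X → ℝ) : E (fun x => max (u x) (v x)) ≤ E u + E v := by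
  have habs : E (fun x => |u x - v x|) ≤ E (u - v) := E_abs E hcontr (u - v)
  have h1 : (fun x => max (u x) (v x))
      = (2⁻¹ : ℝ) • ((u + v) + fun x => |u x - v x|) := by
    funext x
    simp only [Pi.smul_apply, Pi.add_apply, smul_eq_mul]
    rcases le_total (u x) (v x) with h | h
    · rw [max_eq_right h, abs_of_nonpos (sub_nonpos.2 h)]; ring
    · rw [max_eq_left h, abs_of_nonneg (sub_nonneg.2 h)]; ring
  rw [h1, hsmul]
  have h2 : E ((u + v) + fun x => |u x - v x|) ≤ 2 * E (u + v) + 2 * E (u - v) := by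
    refine le_trans (E_add_le E hquad (u + v) _) ?_
    exact add_le_add_right (mul_le_mul_right habs 2) _
  calc ENNReal.ofReal ((2 : ℝ)⁻¹ ^ 2) * E ((u + v) + fun x => |u x - v x|)
      ≤ ENNReal.ofReal ((2 : ℝ)⁻¹ ^ 2) * (2 * E (u + v) + 2 * E (u - v)) :=
        mul_le_mul_right h2 _
    _ = ENNReal.ofReal ((2 : ℝ)⁻¹ ^ 2) * (2 * (E (u + v) + E (u - v))) := by ring_nf
    _ = ENNReal.ofReal ((2 : ℝ)⁻¹ ^ 2) * (2 * (2 * E u + 2 * E v)) := by rw [← hquad u v]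
    _ = (ENNReal.ofReal ((2 : ℝ)⁻¹ ^ 2) * 4) * (E u + E v) := by ring
    _ = E u + E v := by
        have h4 : (4 : ℝ≥0∞) = ENNReal.ofReal (4 : ℝ) := by norm_num
        rw [h4, ← ENNReal.ofReal_mul (by norm_num)]
        norm_num

include hquad hsmul hcontr in
private lemma E_min (u v : X → ℝ) : E (fun x => min (u x) (v x)) ≤ E u + E v := by
  have h1 : (fun x => min (u x) (v x)) = -(fun x => max (-u x) (-v x)) := by
    funext x
    simp [max_neg_neg]
  rw [h1, E_neg E hsmul]
  refine le_trans (E_max E hquad hsmul hcontr (-u) (-v)) ?_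
  rw [E_neg E hsmul, E_neg E hsmul]

include hquad hsmul hcontr in
private lemma E_clamp (u v : X → ℝ) :
    E (fun x => rclamp (u x) (|v x|)) ≤ E u + 2 * E v := by
  have hv1 : E (fun x => |v x|) ≤ E v := E_abs E hcontr v
  have hv2 : E (fun x => -|v x|) ≤ E v := by
    have h1 : (fun x : X => -|v x|) = -(fun x => |v x|) := rfl
    rw [h1, E_neg E hsmul]; exact hv1
  have h3 : E (fun x => max (u x) (-|v x|)) ≤ E u + E v :=
    le_trans (E_max E hquad hsmul hcontr u (fun x => -|v x|)) (add_le_add_right hv2 _)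
  calc E (fun x => rclamp (u x) (|v x|))
      ≤ E (fun x => max (u x) (-|v x|)) + E (fun x => |v x|) :=
        E_min E hquad hsmul hcontr _ _
    _ ≤ (E u + E v) + E v := add_le_add h3 hv1
    _ = E u + 2 * E v := by ring

end eform

/-- Local convergence in `μ`-measure of a net (indexed by `ι`, along the filter `l`)
of functions `F i : X → ℝ` to `f : X → ℝ`. -/
def TendstoLocInMeasure {X : Type*} [MeasurableSpace X] (μ : Measure X)
    {ι : Type*} (l : Filter ι) (F : ι → X → ℝ) (f : X → ℝ) : Prop :=
  ∀ U : Set X, MeasurableSet U → μ U < ⊤ → ∀ ε : ℝ, 0 < ε →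
    Tendsto (fun i => μ (U ∩ {x | ε ≤ |F i x - f x|})) l (𝓝 0)

/-- A Dirichlet form on `L²(μ)`: a map `E : (X → ℝ) → [0,∞]` which (1) only depends on
`μ`-equivalence classes, (2) is a quadratic form, (3) has square-integrable domain,
(4) is lower semicontinuous with respect to `L²(μ)`-convergence of nets of
square-integrable functions, and (5) satisfies `E (C ∘ f) ≤ E f` for every normal
contraction `C : ℝ → ℝ`. -/
def IsDirichletForm {X : Type*} [MeasurableSpace X] (μ : Measure X)
    (E : (X → ℝ) → ℝ≥0∞) : Prop :=
  (∀ f g : X → ℝ, f =ᵐ[μ] g → E f = E g) ∧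
  (∀ f g : X → ℝ, 2 * E f + 2 * E g = E (f + g) + E (f - g)) ∧
  (∀ (c : ℝ) (f : X → ℝ), E (c • f) = ENNReal.ofReal (c ^ 2) * E f) ∧
  (∀ f : X → ℝ, E f < ⊤ → ∫⁻ x, ENNReal.ofReal (f x ^ 2) ∂μ < ⊤) ∧
  (∀ (ι : Type*) [Preorder ι] [IsDirected ι (· ≤ ·)] [Nonempty ι]
    (F : ι → X → ℝ) (f : X → ℝ),
      (∀ i, ∫⁻ x, ENNReal.ofReal (F i x ^ 2) ∂μ < ⊤) →
      (∫⁻ x, ENNReal.ofReal (f x ^ 2) ∂μ < ⊤) →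
      Tendsto (fun i => ∫⁻ x, ENNReal.ofReal ((F i x - f x) ^ 2) ∂μ) atTop (𝓝 0) →
      E f ≤ liminf (fun i => E (F i)) atTop) ∧
  (∀ C : ℝ → ℝ, C 0 = 0 → (∀ x y : ℝ, |C x - C y| ≤ |x - y|) →
    ∀ f : X → ℝ, E (C ∘ f) ≤ E f)

/-- the domain of a Dirichlet form is the intersection of the extended
Dirichlet space with `L²(μ)`. -/
theorem stmt_6 {X : Type*} [MeasurableSpace X] (μ : Measure X) [SigmaFinite μ]
    (E : (X → ℝ) → ℝ≥0∞) (hE : IsDirichletForm μ E)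
    (f : X → ℝ) (hf : ∫⁻ x, ENNReal.ofReal (f x ^ 2) ∂μ < ⊤)
    (ι : Type*) [Preorder ι] [IsDirected ι (· ≤ ·)] [Nonempty ι]
    (F : ι → X → ℝ) (hdom : ∀ i, E (F i) < ⊤)
    (hcauchy : ∀ ε : ℝ, 0 < ε → ∃ i₀, ∀ i j, i₀ ≤ i → i₀ ≤ j →
      E (F i - F j) ≤ ENNReal.ofReal ε)
    (hconv : TendstoLocInMeasure μ atTop F f) :
    E f < ⊤ := by
  obtain ⟨hae, hquad, hsmul, hL2, hlsc, hcontr⟩ := hE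
  obtain ⟨i₀, hi₀⟩ := hcauchy 1 one_pos
  set M : ℝ≥0∞ := 2 * ENNReal.ofReal 1 + 2 * E (F i₀) with hM_def
  have hMne : M ≠ ⊤ := by
    rw [hM_def]
    exact ENNReal.add_ne_top.2 ⟨ENNReal.mul_ne_top (by norm_num) ENNReal.ofReal_ne_top,
      ENNReal.mul_ne_top (by norm_num) (hdom i₀).ne⟩
  have hFb : ∀ i, i₀ ≤ i → E (F i) ≤ M := by
    intro i hi
    calc E (F i) = E ((F i - F i₀) + F i₀) := by rw [sub_add_cancel]
      _ ≤ 2 * E (F i - F i₀) + 2 * E (F i₀) := E_add_le E hquad _ _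
      _ ≤ M := add_le_add_left (mul_le_mul_right (hi₀ i i₀ hi le_rfl) 2) _
  have hFL2 : ∀ k, ∫⁻ x, ENNReal.ofReal (F k x ^ 2) ∂μ < ⊤ := fun k => hL2 (F k) (hdom k)
  -- the clamped nets
  set fk : ι → X → ℝ := fun k x => rclamp (f x) (|F k x|) with hfk_def
  set G : ι → ι → X → ℝ := fun k i x => rclamp (F i x) (|F k x|) with hG_def
  -- square integrability of the clamped functions
  have hGL2 : ∀ k i, ∫⁻ x, ENNReal.ofReal (G k i x ^ 2) ∂μ < ⊤ := by
    intro k i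
    refine lt_of_le_of_lt (lintegral_mono fun x => ENNReal.ofReal_le_ofReal ?_) (hFL2 k)
    exact (rclamp_sq_le (F i x) _ (abs_nonneg _)).trans_eq (sq_abs _)
  have hfkL2 : ∀ k, ∫⁻ x, ENNReal.ofReal (fk k x ^ 2) ∂μ < ⊤ := by
    intro k
    refine lt_of_le_of_lt (lintegral_mono fun x => ENNReal.ofReal_le_ofReal ?_) hf
    exact rclamp_sq_le_self (f x) _ (abs_nonneg _)
  -- finiteness of the dominators
  have hWfin : ∀ g : X → ℝ, (∫⁻ x, ENNReal.ofReal (g x ^ 2) ∂μ < ⊤) →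
      ∫⁻ x, ENNReal.ofReal (4 * g x ^ 2) ∂μ ≠ ⊤ := by
    intro g hg
    have h1 : ∀ x, ENNReal.ofReal (4 * g x ^ 2)
        = ENNReal.ofReal (4 : ℝ) * ENNReal.ofReal (g x ^ 2) := fun x =>
      ENNReal.ofReal_mul (by norm_num)
    simp_rw [h1]
    rw [lintegral_const_mul' _ _ ENNReal.ofReal_ne_top]
    exact ENNReal.mul_ne_top ENNReal.ofReal_ne_top hg.ne
  -- Step 1: for each k, E (fk k) ≤ M + 2 * E (F k)
  have key1 : ∀ k, E (fk k) ≤ M + 2 * E (F k) := by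
    intro k
    have hten : Tendsto (fun i => ∫⁻ x, ENNReal.ofReal ((G k i x - fk k x) ^ 2) ∂μ)
        atTop (𝓝 0) := by
      refine aux_dct (fun i x => ENNReal.ofReal ((G k i x - fk k x) ^ 2))
        (fun x => ENNReal.ofReal (4 * F k x ^ 2)) (hWfin (F k) (hFL2 k)) ?_ ?_
      · intro i x
        refine ENNReal.ofReal_le_ofReal ?_
        have h := rclamp_diff_sq_le (F i x) (f x) (|F k x|) (abs_nonneg _)
        rwa [sq_abs] at h
      · intro U hUm hUfin ε hε
        have hsub : ∀ i, U ∩ {x | ENNReal.ofReal ε ≤ ENNReal.ofReal ((G k i x - fk k x) ^ 2)}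
            ⊆ U ∩ {x | Real.sqrt ε ≤ |F i x - f x|} := by
          intro i x hx
          refine ⟨hx.1, ?_⟩
          have h1 : ε ≤ (G k i x - fk k x) ^ 2 :=
            (ENNReal.ofReal_le_ofReal_iff (sq_nonneg _)).1 hx.2
          have h2 : (G k i x - fk k x) ^ 2 ≤ (F i x - f x) ^ 2 := by
            have hl := rclamp_lip (F i x) (f x) (|F k x|)
            have h5 : |G k i x - fk k x| ^ 2 ≤ |F i x - f x| ^ 2 :=
              pow_le_pow_left₀ (abs_nonneg _) hl 2
            calc (G k i x - fk k x) ^ 2 = |G k i x - fk k x| ^ 2 := (sq_abs _).symm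
              _ ≤ |F i x - f x| ^ 2 := h5
              _ = (F i x - f x) ^ 2 := sq_abs _
          rw [Set.mem_setOf_eq, ← Real.sqrt_sq_eq_abs]
          exact Real.sqrt_le_sqrt (h1.trans h2)
        refine tendsto_of_tendsto_of_tendsto_of_le_of_le tendsto_const_nhds
          (hconv U hUm hUfin _ (Real.sqrt_pos.2 hε)) (fun i => zero_le)
          (fun i => measure_mono (hsub i))
    obtain ⟨s, hs1, hs2⟩ := aux_seq i₀ _ hten
    have hs2' : Tendsto
        (fun m : ULift ℕ => ∫⁻ x, ENNReal.ofReal ((G k (s m.down) x - fk k x) ^ 2) ∂μ)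
        atTop (𝓝 0) :=
      hs2.comp (tendsto_atTop_atTop.2 fun b => ⟨ULift.up b, fun a ha => ha⟩)
    have happ : E (fk k) ≤ liminf (fun m : ULift ℕ => E (G k (s m.down))) atTop :=
      hlsc (ULift ℕ) (fun m => G k (s m.down)) (fk k) (fun m => hGL2 k (s m.down))
        (hfkL2 k) hs2'
    refine happ.trans (Filter.liminf_le_of_frequently_le' ?_)
    refine Filter.Eventually.frequently (Filter.Eventually.of_forall fun m => ?_)
    calc E (G k (s m.down)) ≤ E (F (s m.down)) + 2 * E (F k) :=
          E_clamp E hquad hsmul hcontr (F (s m.down)) (F k)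
      _ ≤ M + 2 * E (F k) := add_le_add_left (hFb _ (hs1 _)) _
  -- Step 2: E f ≤ 3 M
  have hten2 : Tendsto (fun k => ∫⁻ x, ENNReal.ofReal ((fk k x - f x) ^ 2) ∂μ)
      atTop (𝓝 0) := by
    refine aux_dct (fun k x => ENNReal.ofReal ((fk k x - f x) ^ 2))
      (fun x => ENNReal.ofReal (4 * f x ^ 2)) (hWfin f hf) ?_ ?_
    · intro k x
      exact ENNReal.ofReal_le_ofReal (rclamp_sub_self_sq_le (f x) (F k x))
    · intro U hUm hUfin ε hε
      have hsub : ∀ k, U ∩ {x | ENNReal.ofReal ε ≤ ENNReal.ofReal ((fk k x - f x) ^ 2)}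
          ⊆ U ∩ {x | Real.sqrt ε / 2 ≤ |F k x - f x|} := by
        intro k x hx
        refine ⟨hx.1, ?_⟩
        have h1 : ε ≤ (fk k x - f x) ^ 2 :=
          (ENNReal.ofReal_le_ofReal_iff (sq_nonneg _)).1 hx.2
        have hl : |fk k x - f x| ≤ 2 * |F k x - f x| :=
          rclamp_sub_self_le (f x) (F k x)
        have h2 : (fk k x - f x) ^ 2 ≤ (2 * |F k x - f x|) ^ 2 := by
          have h5 : |fk k x - f x| ^ 2 ≤ (2 * |F k x - f x|) ^ 2 :=
            pow_le_pow_left₀ (abs_nonneg _) hl 2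
          calc (fk k x - f x) ^ 2 = |fk k x - f x| ^ 2 := (sq_abs _).symm
            _ ≤ (2 * |F k x - f x|) ^ 2 := h5
        have h3 : Real.sqrt ε ≤ 2 * |F k x - f x| := by
          have h4 := Real.sqrt_le_sqrt (h1.trans h2)
          rwa [Real.sqrt_sq (by positivity)] at h4
        rw [Set.mem_setOf_eq]
        linarith
      refine tendsto_of_tendsto_of_tendsto_of_le_of_le tendsto_const_nhds
        (hconv U hUm hUfin _ (by positivity)) (fun k => zero_le)
        (fun k => measure_mono (hsub k))
  obtain ⟨t, ht1, ht2⟩ := aux_seq i₀ _ hten2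
  have ht2' : Tendsto
      (fun m : ULift ℕ => ∫⁻ x, ENNReal.ofReal ((fk (t m.down) x - f x) ^ 2) ∂μ)
      atTop (𝓝 0) :=
    ht2.comp (tendsto_atTop_atTop.2 fun b => ⟨ULift.up b, fun a ha => ha⟩)
  have happ2 : E f ≤ liminf (fun m : ULift ℕ => E (fk (t m.down))) atTop :=
    hlsc (ULift ℕ) (fun m => fk (t m.down)) f (fun m => hfkL2 (t m.down)) hf ht2'
  have key3 : liminf (fun m : ULift ℕ => E (fk (t m.down))) atTop ≤ M + 2 * M := by
    refine Filter.liminf_le_of_frequently_le' ?_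
    refine Filter.Eventually.frequently (Filter.Eventually.of_forall fun m => ?_)
    exact le_trans (key1 (t m.down)) (add_le_add_right (mul_le_mul_right (hFb _ (ht1 _)) 2) _)
  refine lt_of_le_of_lt (happ2.trans key3) ?_
  rw [lt_top_iff_ne_top]
  exact ENNReal.add_ne_top.2 ⟨hMne, ENNReal.mul_ne_top (by norm_num) hMne⟩
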